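/- Let A be a circular convolution operator on ℓ²(ℤ_d×ℤ_d) with kernel a and let {Λ_k : k = 1,…,N_A} be the level sets of â. Let Ω ⊂ ℤ_d×ℤ_d and for each (j_1,j_2) ∈ Ω let r_{(j_1,j_2)} be the degree of the A-annihilator of e_{(j_1,j_2)} (the monic polynomial p of smallest degree with p(A)e_{(j_1,j_2)} = 0). If for each (j_1,j_2) ∈ Ω one has l_{(j_1,j_2)} ≥ r_{(j_1,j_2)} − 1 and for each k the submatrix of F_d ⊗ F_d formed by the rows indexed by Λ_k and the columns indexed by Ω has rank |Λ_k|, then Y = {e_{(j_1,j_2)}, A e_{(j_1,j_2)}, …, A^{l_{(j_1,j_2)}} e_{(j_1,j_2)} : (j_1,j_2) ∈ Ω} is a frame for ℓ²(ℤ_d×ℤ_d). -/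

import Mathlib

open Matrix

/-- Unnormalized 2D discrete Fourier transform of `a : ℤ_d × ℤ_d → ℂ`. -/
noncomputable def hatKer2 (d : ℕ) [NeZero d] (a : ZMod d × ZMod d → ℂ) :
    ZMod d × ZMod d → ℂ :=
  fun j => ∑ k : ZMod d × ZMod d,
    a k * Complex.exp (-(2 * (Real.pi : ℂ) * Complex.I) *
      ((j.1.val : ℂ) * (k.1.val : ℂ) + (j.2.val : ℂ) * (k.2.val : ℂ)) / (d : ℂ))

/-- The 2D circular convolution operator with kernel `a`, as a matrix. -/
def convMat2 (d : ℕ) (a : ZMod d × ZMod d → ℂ) :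
    Matrix (ZMod d × ZMod d) (ZMod d × ZMod d) ℂ :=
  Matrix.of fun k i => a (k - i)

/-- The Kronecker product `F_d ⊗ F_d`: its entry at `((i₁,i₂),(j₁,j₂))` is
`(1/d) ω_d^{i₁j₁ + i₂j₂}`. -/
noncomputable def F2Mat (d : ℕ) : Matrix (ZMod d × ZMod d) (ZMod d × ZMod d) ℂ :=
  Matrix.of fun i j => ((d : ℂ))⁻¹ * Complex.exp (-(2 * (Real.pi : ℂ) * Complex.I) *
    ((i.1.val : ℂ) * (j.1.val : ℂ) + (i.2.val : ℂ) * (j.2.val : ℂ)) / (d : ℂ))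

/-- The degree of the `A`-annihilator of `v`: the smallest degree of a monic
polynomial `p` with `p(A) v = 0`. -/
noncomputable def annihDeg2 (d : ℕ) [NeZero d]
    (A : Matrix (ZMod d × ZMod d) (ZMod d × ZMod d) ℂ) (v : ZMod d × ZMod d → ℂ) : ℕ :=
  sInf {n : ℕ | ∃ p : Polynomial ℂ, p.Monic ∧ p.natDegree = n ∧
    (Polynomial.aeval A p) *ᵥ v = 0}

variable {d : ℕ} [NeZero d]

def zdot {d : ℕ} (i k : ZMod d × ZMod d) : ZMod d := i.1 * k.1 + i.2 * k.2

noncomputable def eta (d : ℕ) [NeZero d] (i : ZMod d × ZMod d) : ZMod d × ZMod d → ℂ :=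
  fun k => ZMod.stdAddChar (zdot i k)

lemma exp_eq_char (i k : ZMod d × ZMod d) :
    Complex.exp (-(2 * (Real.pi : ℂ) * Complex.I) *
      ((i.1.val : ℂ) * (k.1.val : ℂ) + (i.2.val : ℂ) * (k.2.val : ℂ)) / (d : ℂ))
    = ZMod.stdAddChar (-(zdot i k)) := by
  have h : (-(zdot i k)) = (((-(i.1.val * k.1.val + i.2.val * k.2.val) : ℤ)) : ZMod d) := by
    push_cast
    simp [zdot, ZMod.natCast_val]
  rw [h, ZMod.stdAddChar_coe]
  push_cast
  ring_nf

lemma hatKer2_eq (a : ZMod d × ZMod d → ℂ) (i : ZMod d × ZMod d) :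
    hatKer2 d a i = ∑ k : ZMod d × ZMod d, a k * ZMod.stdAddChar (-(zdot i k)) := by
  unfold hatKer2; exact Finset.sum_congr rfl fun k _ => by rw [exp_eq_char]

lemma F2Mat_eq (i j : ZMod d × ZMod d) :
    F2Mat d i j = (d : ℂ)⁻¹ * ZMod.stdAddChar (-(zdot i j)) := by
  unfold F2Mat; rw [Matrix.of_apply, exp_eq_char]

lemma zdot_add_right (i k m : ZMod d × ZMod d) :
    zdot i (k + m) = zdot i k + zdot i m := by
  simp [zdot]; ring

lemma zdot_sub_right (i k m : ZMod d × ZMod d) :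
    zdot i (k - m) = zdot i k - zdot i m := by
  simp [zdot]; ring

/-- eigenvalue equation -/
lemma conv_eta (a : ZMod d × ZMod d → ℂ) (i : ZMod d × ZMod d) :
    convMat2 d a *ᵥ eta d i = hatKer2 d a i • eta d i := by
  funext k
  show ∑ m, a (k - m) * ZMod.stdAddChar (zdot i m) = _
  rw [← (Equiv.subLeft k).sum_comp (fun m => a (k - m) * ZMod.stdAddChar (zdot i m))]
  simp only [Equiv.subLeft_apply, sub_sub_cancel]
  rw [Pi.smul_apply, hatKer2_eq, smul_eq_mul, Finset.sum_mul]
  refine Finset.sum_congr rfl fun t _ => ?_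
  have : zdot i (k - t) = zdot i k + -(zdot i t) := by rw [zdot_sub_right]; ring
  rw [this, AddChar.map_add_eq_mul]
  show a t * (ZMod.stdAddChar (zdot i k) * ZMod.stdAddChar (-zdot i t)) =
    a t * ZMod.stdAddChar (-zdot i t) * eta d i k
  show _ = a t * ZMod.stdAddChar (-zdot i t) * ZMod.stdAddChar (zdot i k)
  ring

lemma sum_char_1d (t : ZMod d) :
    ∑ i : ZMod d, ZMod.stdAddChar (i * t) = if t = 0 then (d : ℂ) else 0 := by
  split_ifs with h
  · simp only [h, mul_zero, AddChar.map_zero_eq_one, Finset.sum_const, Finset.card_univ,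
      ZMod.card, nsmul_eq_mul, mul_one]
  · have := AddChar.sum_eq_zero_of_ne_one (ZMod.isPrimitive_stdAddChar d h)
    rw [← this]
    exact Finset.sum_congr rfl fun i _ => by rw [AddChar.mulShift_apply, mul_comm]

lemma sum_char_2d (t : ZMod d × ZMod d) :
    ∑ i : ZMod d × ZMod d, ZMod.stdAddChar (zdot i t) =
      if t = 0 then ((d : ℂ))^2 else 0 := by
  rw [Fintype.sum_prod_type]
  have : ∀ i1 : ZMod d, ∀ i2 : ZMod d,
      ZMod.stdAddChar (zdot ((i1, i2) : ZMod d × ZMod d) t)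
      = ZMod.stdAddChar (i1 * t.1) * ZMod.stdAddChar (i2 * t.2) := fun i1 i2 => by
    rw [← AddChar.map_add_eq_mul]; rfl
  simp only [this, ← Finset.sum_mul, ← Finset.mul_sum]
  rw [sum_char_1d, sum_char_1d]
  by_cases h1 : t.1 = 0 <;> by_cases h2 : t.2 = 0 <;>
    simp [h1, h2, Prod.ext_iff, sq]

lemma single_eq_sum (j : ZMod d × ZMod d) :
    (Pi.single j 1 : ZMod d × ZMod d → ℂ) =
      (((d : ℂ))^2)⁻¹ • ∑ i : ZMod d × ZMod d,
        ZMod.stdAddChar (-(zdot i j)) • eta d i := by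
  funext k
  simp only [Pi.smul_apply, Finset.sum_apply, smul_eq_mul]
  have : ∀ i : ZMod d × ZMod d, ZMod.stdAddChar (-zdot i j) * eta d i k
      = ZMod.stdAddChar (zdot i (k - j)) := fun i => by
    rw [eta, zdot_sub_right, sub_eq_add_neg, AddChar.map_add_eq_mul]; ring
  rw [Finset.sum_congr rfl fun i _ => this i, sum_char_2d]
  rcases eq_or_ne k j with h | h
  · simp [h, sub_self, Pi.single_apply, inv_mul_cancel₀ (pow_ne_zero 2 (show (d:ℂ) ≠ 0 from Nat.cast_ne_zero.2 (NeZero.ne d)))]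
  · simp [sub_eq_zero, h, Pi.single_apply, (Ne.symm h)]

lemma sum_mulVec {α : Type*} (s : Finset α)
    (f : α → Matrix (ZMod d × ZMod d) (ZMod d × ZMod d) ℂ) (v : ZMod d × ZMod d → ℂ) :
    (∑ x ∈ s, f x) *ᵥ v = ∑ x ∈ s, (f x *ᵥ v) := by
  classical
  induction s using Finset.induction_on with
  | empty => simp
  | insert _ _ h ih => rw [Finset.sum_insert h, Finset.sum_insert h, Matrix.add_mulVec, ih]

lemma pow_mulVec_eta (a : ZMod d × ZMod d → ℂ) (i : ZMod d × ZMod d) (n : ℕ) :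
    (convMat2 d a) ^ n *ᵥ eta d i = (hatKer2 d a i) ^ n • eta d i := by
  induction n with
  | zero => simp
  | succ n ih =>
      rw [pow_succ, ← Matrix.mulVec_mulVec, conv_eta, Matrix.mulVec_smul, ih, smul_smul,
        pow_succ, mul_comm]

lemma aeval_mulVec_eta (a : ZMod d × ZMod d → ℂ) (i : ZMod d × ZMod d) (p : Polynomial ℂ) :
    (Polynomial.aeval (convMat2 d a) p) *ᵥ eta d i = p.eval (hatKer2 d a i) • eta d i := by
  rw [Polynomial.aeval_eq_sum_range, Polynomial.eval_eq_sum_range, _root_.sum_mulVec]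
  rw [Finset.sum_smul]
  refine Finset.sum_congr rfl fun m _ => ?_
  rw [Matrix.smul_mulVec, pow_mulVec_eta, smul_smul]

lemma annihDeg2_mem (A : Matrix (ZMod d × ZMod d) (ZMod d × ZMod d) ℂ)
    (v : ZMod d × ZMod d → ℂ) :
    ∃ p : Polynomial ℂ, p.Monic ∧ p.natDegree = annihDeg2 d A v ∧
      (Polynomial.aeval A p) *ᵥ v = 0 := by
  have hne : {n : ℕ | ∃ p : Polynomial ℂ, p.Monic ∧ p.natDegree = n ∧
      (Polynomial.aeval A p) *ᵥ v = 0}.Nonempty :=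
    ⟨A.charpoly.natDegree, A.charpoly, A.charpoly_monic, rfl, by
      rw [Matrix.aeval_self_charpoly, Matrix.zero_mulVec]⟩
  exact Nat.sInf_mem hne

lemma mulVec_sum' {α : Type*} (M : Matrix (ZMod d × ZMod d) (ZMod d × ZMod d) ℂ)
    (s : Finset α) (f : α → (ZMod d × ZMod d → ℂ)) :
    M *ᵥ (∑ x ∈ s, f x) = ∑ x ∈ s, M *ᵥ f x := by
  have h := map_sum M.mulVecLin f s
  simpa only [Matrix.mulVecLin_apply] using h

lemma pow_mem_span (a : ZMod d × ZMod d → ℂ) (Ω : Finset (ZMod d × ZMod d))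
    (l : ZMod d × ZMod d → ℕ)
    (hl : ∀ j ∈ Ω, annihDeg2 d (convMat2 d a) (Pi.single j 1) - 1 ≤ l j)
    (j : ZMod d × ZMod d) (hj : j ∈ Ω) (n : ℕ) :
    (convMat2 d a) ^ n *ᵥ (Pi.single j 1 : ZMod d × ZMod d → ℂ) ∈
      Submodule.span ℂ {v : ZMod d × ZMod d → ℂ | ∃ j ∈ Ω, ∃ n ≤ l j,
        v = (convMat2 d a) ^ n *ᵥ (Pi.single j 1 : ZMod d × ZMod d → ℂ)} := by
  set A := convMat2 d a with hA
  set v : ZMod d × ZMod d → ℂ := Pi.single j 1 with hv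
  induction n using Nat.strong_induction_on with
  | _ n ih =>
    rcases le_or_gt n (l j) with hn | hn
    · exact Submodule.subset_span ⟨j, hj, n, hn, rfl⟩
    · obtain ⟨p, hmonic, hdeg, hann⟩ := annihDeg2_mem A v
      have hrn : p.natDegree ≤ n := by
        have h1 := hl j hj
        rw [← hv, ← hdeg] at h1
        omega
      have hpne : p ≠ 0 := hmonic.ne_zero
      rcases Nat.eq_zero_or_pos p.natDegree with h0 | hpos
      · have hp1 : p = 1 := hmonic.natDegree_eq_zero.mp h0
        rw [hp1] at hann
        have hv0 : v = 0 := by simpa using hann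
        rw [hv0, Matrix.mulVec_zero]
        exact Submodule.zero_mem _
      · set q : Polynomial ℂ := Polynomial.X ^ p.natDegree - p with hq
        have h1 : (Polynomial.X ^ p.natDegree : Polynomial ℂ).degree
            = (p.natDegree : WithBot ℕ) := Polynomial.degree_X_pow _
        have hdegq : q.degree < (p.natDegree : WithBot ℕ) := by
          have h2 := Polynomial.degree_sub_lt
            (show (Polynomial.X ^ p.natDegree : Polynomial ℂ).degree = p.degree by
              rw [h1, Polynomial.degree_eq_natDegree hpne])
            (pow_ne_zero _ Polynomial.X_ne_zero)
            (by rw [Polynomial.leadingCoeff_X_pow, hmonic.leadingCoeff])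
          rwa [h1] at h2
        have hnatq : q.natDegree < p.natDegree := by
          rcases eq_or_ne q 0 with h | h
          · rw [h]; simpa using hpos
          · exact (Polynomial.natDegree_lt_iff_degree_lt h).mpr hdegq
        have key : A ^ p.natDegree *ᵥ v
            = ∑ m ∈ Finset.range p.natDegree, q.coeff m • (A ^ m *ᵥ v) := by
          have h2 : Polynomial.aeval A q
              = ∑ m ∈ Finset.range p.natDegree, q.coeff m • A ^ m :=
            Polynomial.aeval_eq_sum_range' hnatq A
          have h3 : Polynomial.aeval A q *ᵥ v = A ^ p.natDegree *ᵥ v := by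
            rw [hq, map_sub, Matrix.sub_mulVec, hann, sub_zero, map_pow,
              Polynomial.aeval_X]
          rw [← h3, h2, _root_.sum_mulVec]
          exact Finset.sum_congr rfl fun m _ => by rw [Matrix.smul_mulVec]
        have hAn : A ^ n *ᵥ v = ∑ m ∈ Finset.range p.natDegree,
            q.coeff m • (A ^ (n - p.natDegree + m) *ᵥ v) := by
          have h4 : A ^ n = A ^ (n - p.natDegree) * A ^ p.natDegree := by
            rw [← pow_add]; congr 1; omega
          rw [h4, ← Matrix.mulVec_mulVec, key, mulVec_sum']
          refine Finset.sum_congr rfl fun m _ => ?_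
          rw [Matrix.mulVec_smul, Matrix.mulVec_mulVec, ← pow_add]
        rw [hAn]
        refine Submodule.sum_mem _ fun m hm => Submodule.smul_mem _ _ ?_
        have hlt : n - p.natDegree + m < n := by
          have := Finset.mem_range.mp hm; omega
        exact ih _ hlt

noncomputable def lagP (T : Finset ℂ) (c : ℂ) : Polynomial ℂ :=
  ∏ c' ∈ T.erase c, (Polynomial.C (c - c')⁻¹ * (Polynomial.X - Polynomial.C c'))

lemma lagP_eval_self (T : Finset ℂ) (c : ℂ) : (lagP T c).eval c = 1 := by
  rw [lagP, Polynomial.eval_prod]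
  refine Finset.prod_eq_one fun c' hc' => ?_
  have h : c' ≠ c := (Finset.mem_erase.mp hc').1
  simp only [Polynomial.eval_mul, Polynomial.eval_C, Polynomial.eval_sub, Polynomial.eval_X]
  exact inv_mul_cancel₀ (sub_ne_zero.mpr (Ne.symm h))

lemma lagP_eval_ne (T : Finset ℂ) (c y : ℂ) (hy : y ∈ T) (hne : y ≠ c) :
    (lagP T c).eval y = 0 := by
  rw [lagP, Polynomial.eval_prod]
  refine Finset.prod_eq_zero (Finset.mem_erase.mpr ⟨hne, hy⟩) ?_
  simp

lemma aeval_single (a : ZMod d × ZMod d → ℂ) (p : Polynomial ℂ) (jj : ZMod d × ZMod d) :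
    (Polynomial.aeval (convMat2 d a) p) *ᵥ (Pi.single jj 1 : ZMod d × ZMod d → ℂ)
      = (((d : ℂ))^2)⁻¹ • ∑ i : ZMod d × ZMod d,
          (ZMod.stdAddChar (-(zdot i jj)) * p.eval (hatKer2 d a i)) • eta d i := by
  rw [single_eq_sum, Matrix.mulVec_smul, mulVec_sum']
  congr 1
  refine Finset.sum_congr rfl fun i _ => ?_
  rw [Matrix.mulVec_smul, aeval_mulVec_eta, smul_smul]

lemma eta_mem_span (a : ZMod d × ZMod d → ℂ)
    (Ω : Finset (ZMod d × ZMod d)) (l : ZMod d × ZMod d → ℕ)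
    (hl : ∀ j ∈ Ω, annihDeg2 d (convMat2 d a) (Pi.single j 1) - 1 ≤ l j)
    (hrank : ∀ c ∈ Set.range (hatKer2 d a),
      Matrix.rank (Matrix.of
          fun (r : {j : ZMod d × ZMod d // hatKer2 d a j = c}) (q : ↥Ω) =>
            F2Mat d r.1 q.1)
        = Nat.card {j : ZMod d × ZMod d | hatKer2 d a j = c})
    (i0 : ZMod d × ZMod d) :
    eta d i0 ∈ Submodule.span ℂ {v : ZMod d × ZMod d → ℂ | ∃ j ∈ Ω, ∃ n ≤ l j,
        v = (convMat2 d a) ^ n *ᵥ (Pi.single j 1 : ZMod d × ZMod d → ℂ)} := by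
  classical
  have hd0 : (d : ℂ) ≠ 0 := Nat.cast_ne_zero.2 (NeZero.ne d)
  set S := {v : ZMod d × ZMod d → ℂ | ∃ j ∈ Ω, ∃ n ≤ l j,
      v = (convMat2 d a) ^ n *ᵥ (Pi.single j 1 : ZMod d × ZMod d → ℂ)} with hS
  set c : ℂ := hatKer2 d a i0 with hc
  have hcr : c ∈ Set.range (hatKer2 d a) := ⟨i0, rfl⟩
  have hr := hrank c hcr
  set M : Matrix {j : ZMod d × ZMod d // hatKer2 d a j = c} ↥Ω ℂ :=
    Matrix.of (fun r q => F2Mat d r.1 q.1) with hM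
  -- surjectivity from the rank hypothesis
  have hrange : LinearMap.range M.mulVecLin = ⊤ := by
    apply Submodule.eq_top_of_finrank_eq
    have h1 : Module.finrank ℂ (LinearMap.range M.mulVecLin) = M.rank := rfl
    rw [h1, hr, Nat.card_eq_fintype_card, Module.finrank_pi]
    exact Fintype.card_congr' rfl
  have hsurj : Function.Surjective M.mulVecLin := LinearMap.range_eq_top.mp hrange
  obtain ⟨x, hx⟩ := hsurj (Pi.single (⟨i0, rfl⟩ : {j : ZMod d × ZMod d // hatKer2 d a j = c}) 1)
  rw [Matrix.mulVecLin_apply] at hx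
  -- the Lagrange interpolation polynomial
  set T : Finset ℂ := Finset.image (hatKer2 d a) Finset.univ with hT
  set p : Polynomial ℂ := lagP T c with hp
  have hpval : ∀ i : ZMod d × ZMod d,
      p.eval (hatKer2 d a i) = if hatKer2 d a i = c then 1 else 0 := by
    intro i
    split_ifs with h
    · rw [h, hp, lagP_eval_self]
    · exact lagP_eval_ne _ _ _ (Finset.mem_image_of_mem _ (Finset.mem_univ i)) h
  -- z is in the span
  set A := convMat2 d a with hA
  set z : ZMod d × ZMod d → ℂ :=
    ∑ q : ↥Ω, x q • ((Polynomial.aeval A p) *ᵥ (Pi.single q.1 1 : ZMod d × ZMod d → ℂ))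
    with hz
  have hzmem : z ∈ Submodule.span ℂ S := by
    refine Submodule.sum_mem _ fun q _ => Submodule.smul_mem _ _ ?_
    rw [Polynomial.aeval_eq_sum_range, _root_.sum_mulVec]
    refine Submodule.sum_mem _ fun m _ => ?_
    rw [Matrix.smul_mulVec]
    exact Submodule.smul_mem _ _ (pow_mem_span a Ω l hl q.1 q.2 m)
  -- compute z
  have hzval : z = ((d : ℂ))⁻¹ • eta d i0 := by
    have step1 : z = ((( d : ℂ))^2)⁻¹ • ∑ q : ↥Ω, ∑ i : ZMod d × ZMod d,
        (x q * (ZMod.stdAddChar (-(zdot i q.1)) * p.eval (hatKer2 d a i))) • eta d i := by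
      rw [hz, Finset.smul_sum]
      refine Finset.sum_congr rfl fun q _ => ?_
      rw [aeval_single, smul_comm]
      congr 1
      rw [Finset.smul_sum]
      refine Finset.sum_congr rfl fun i _ => ?_
      rw [smul_smul]
    have step2 : ∑ q : ↥Ω, ∑ i : ZMod d × ZMod d,
        (x q * (ZMod.stdAddChar (-(zdot i q.1)) * p.eval (hatKer2 d a i))) • eta d i
        = ∑ i : ZMod d × ZMod d,
          ((∑ q : ↥Ω, x q * ZMod.stdAddChar (-(zdot i q.1))) * p.eval (hatKer2 d a i))
            • eta d i := by
      rw [Finset.sum_comm]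
      refine Finset.sum_congr rfl fun i _ => ?_
      rw [← Finset.sum_smul, Finset.sum_mul]
      congr 1
      exact Finset.sum_congr rfl fun q _ => by ring
    have step3 : ∑ i : ZMod d × ZMod d,
        ((∑ q : ↥Ω, x q * ZMod.stdAddChar (-(zdot i q.1))) * p.eval (hatKer2 d a i))
          • eta d i
        = ∑ i ∈ Finset.univ.filter (fun i => hatKer2 d a i = c),
            (∑ q : ↥Ω, x q * ZMod.stdAddChar (-(zdot i q.1))) • eta d i := by
      rw [Finset.sum_filter]
      refine Finset.sum_congr rfl fun i _ => ?_
      rw [hpval i]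
      split_ifs with h
      · rw [mul_one]
      · rw [mul_zero, zero_smul]
    have step4 : ∑ i ∈ Finset.univ.filter (fun i => hatKer2 d a i = c),
            (∑ q : ↥Ω, x q * ZMod.stdAddChar (-(zdot i q.1))) • eta d i
        = ∑ r : {j : ZMod d × ZMod d // hatKer2 d a j = c},
            (∑ q : ↥Ω, x q * ZMod.stdAddChar (-(zdot r.1 q.1))) • eta d r.1 := by
      exact Finset.sum_subtype _ (by simp) _
    have hMx : ∀ r : {j : ZMod d × ZMod d // hatKer2 d a j = c},
        ∑ q : ↥Ω, x q * ZMod.stdAddChar (-(zdot r.1 q.1))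
          = (d : ℂ) * ((M *ᵥ x) r) := by
      intro r
      simp only [Matrix.mulVec, dotProduct]
      rw [Finset.mul_sum]
      refine Finset.sum_congr rfl fun q _ => ?_
      show x q * _ = (d : ℂ) * (M r q * x q)
      rw [hM]
      show x q * _ = (d : ℂ) * (F2Mat d r.1 q.1 * x q)
      rw [F2Mat_eq, ← mul_assoc, ← mul_assoc, mul_inv_cancel₀ hd0, one_mul, mul_comm]
    have step5 : ∑ r : {j : ZMod d × ZMod d // hatKer2 d a j = c},
            (∑ q : ↥Ω, x q * ZMod.stdAddChar (-(zdot r.1 q.1))) • eta d r.1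
        = (d : ℂ) • eta d i0 := by
      rw [Finset.sum_congr rfl fun r _ => by rw [hMx r, hx]]
      rw [Finset.sum_eq_single (⟨i0, rfl⟩ : {j : ZMod d × ZMod d // hatKer2 d a j = c})]
      · simp
      · intro b _ hb
        rw [Pi.single_eq_of_ne hb, mul_zero, zero_smul]
      · intro h; exact absurd (Finset.mem_univ _) h
    rw [step1, step2, step3, step4, step5, smul_smul, sq]
    rw [mul_inv, mul_assoc, inv_mul_cancel₀ hd0, mul_one]
  have : eta d i0 = (d : ℂ) • z := by
    rw [hzval, smul_smul, mul_inv_cancel₀ hd0, one_smul]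
  rw [this]
  exact Submodule.smul_mem _ _ hzmem

/-- if `l j ≥ r_j - 1`, where `r_j` is the degree of the `A`-annihilator
of `e_j`, and for each value `c` of `â` the submatrix of `F_d ⊗ F_d` with rows indexed
by the level set `Λ = {j : â j = c}` and columns indexed by `Ω` has rank `|Λ|`, then
`Y = {A^n e_j : j ∈ Ω, n ≤ l j}` is a frame for `ℓ²(ℤ_d × ℤ_d)`. -/
theorem stmt13 (d : ℕ) [NeZero d] (a : ZMod d × ZMod d → ℂ)
    (Ω : Finset (ZMod d × ZMod d)) (l : ZMod d × ZMod d → ℕ)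
    (hl : ∀ j ∈ Ω, annihDeg2 d (convMat2 d a) (Pi.single j 1) - 1 ≤ l j)
    (hrank : ∀ c ∈ Set.range (hatKer2 d a),
      Matrix.rank (Matrix.of
          fun (r : {j : ZMod d × ZMod d // hatKer2 d a j = c}) (q : ↥Ω) =>
            F2Mat d r.1 q.1)
        = Nat.card {j : ZMod d × ZMod d | hatKer2 d a j = c}) :
    Submodule.span ℂ {v : ZMod d × ZMod d → ℂ | ∃ j ∈ Ω, ∃ n ≤ l j,
        v = (convMat2 d a) ^ n *ᵥ (Pi.single j 1 : ZMod d × ZMod d → ℂ)} = ⊤ := by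
  classical
  rw [eq_top_iff]
  intro v _
  have hsingle : ∀ j : ZMod d × ZMod d, (Pi.single j 1 : ZMod d × ZMod d → ℂ) ∈
      Submodule.span ℂ {v : ZMod d × ZMod d → ℂ | ∃ j ∈ Ω, ∃ n ≤ l j,
        v = (convMat2 d a) ^ n *ᵥ (Pi.single j 1 : ZMod d × ZMod d → ℂ)} := by
    intro j
    rw [single_eq_sum]
    exact Submodule.smul_mem _ _ (Submodule.sum_mem _ fun i _ =>
      Submodule.smul_mem _ _ (eta_mem_span a Ω l hl hrank i))
  have hv : v = ∑ j : ZMod d × ZMod d, v j • (Pi.single j 1 : ZMod d × ZMod d → ℂ) := by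
    funext k
    simp [Pi.single_apply]
  rw [hv]
  exact Submodule.sum_mem _ fun j _ => Submodule.smul_mem _ _ (hsingle j)
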